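/- Let G be a finite graph with probability weights μ and let I be an independent set with a := μ(I), b := μ(N(I)), u := μ(V(G) \ (I ∪ N(I))) (so a + b + u = 1 and u < 1). Then lim_{n→∞} ᾱ(G^n) ≥ a/(a+b). -/

import Mathlib

open Finset Filter

def IsIndepSet {V : Type*} (G : SimpleGraph V) (I : Finset V) : Prop :=
  ∀ u ∈ I, ∀ v ∈ I, ¬ G.Adj u v

noncomputable def nbhd {V : Type*} [Fintype V] (G : SimpleGraph V) (I : Finset V) : Finset V :=
  @Finset.filter _ (fun v => ∃ u ∈ I, G.Adj u v) (Classical.decPred _) Finset.univ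

def fmeas {V : Type*} (μ : V → ℝ) (S : Finset V) : ℝ := ∑ v ∈ S, μ v

def tpow {V : Type*} (G : SimpleGraph V) (n : ℕ) : SimpleGraph (Fin n → V) where
  Adj u v := u ≠ v ∧ ∀ i, G.Adj (u i) (v i)
  symm := ⟨fun u v h => ⟨h.1.symm, fun i => (h.2 i).symm⟩⟩
  loopless := ⟨fun u h => h.1 rfl⟩

noncomputable def pmeas {V : Type*} (μ : V → ℝ) (n : ℕ) (S : Finset (Fin n → V)) : ℝ :=
  ∑ x ∈ S, ∏ i, μ (x i)

noncomputable def alphaBar {V : Type*} (G : SimpleGraph V) (μ : V → ℝ) : ℝ :=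
  sSup {x : ℝ | ∃ I : Finset V, IsIndepSet G I ∧ x = fmeas μ I}

noncomputable def alphaPow {V : Type*} (G : SimpleGraph V) (μ : V → ℝ) (n : ℕ) : ℝ :=
  alphaBar (tpow G n) (fun x => ∏ i, μ (x i))

section Aux
open scoped Classical

variable {V : Type*} [Fintype V] (G : SimpleGraph V) (μ : V → ℝ)

lemma mem_nbhd_iff {I : Finset V} {v : V} : v ∈ nbhd G I ↔ ∃ u ∈ I, G.Adj u v := by
  simp only [nbhd, Finset.mem_filter, Finset.mem_univ, true_and]

lemma pmeas_univ (hμ1 : ∑ v, μ v = 1) (n : ℕ) :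
    pmeas μ n (univ : Finset (Fin n → V)) = 1 := by
  unfold pmeas
  rw [← Fintype.piFinset_univ, ← Finset.prod_univ_sum]
  simp [hμ1]

lemma le_alphaPow (hμ0 : ∀ v, 0 ≤ μ v) (hμ1 : ∑ v, μ v = 1) (n : ℕ)
    (S : Finset (Fin n → V)) (hS : IsIndepSet (tpow G n) S) :
    pmeas μ n S ≤ alphaPow G μ n := by
  apply le_csSup
  · refine ⟨1, ?_⟩
    rintro x ⟨T, hT, rfl⟩
    calc fmeas (fun x : Fin n → V => ∏ i, μ (x i)) T
        ≤ pmeas μ n univ := by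
          apply Finset.sum_le_sum_of_subset_of_nonneg (Finset.subset_univ T)
          intro i _ _
          exact Finset.prod_nonneg fun _ _ => hμ0 _
      _ = 1 := pmeas_univ μ hμ1 n
  · exact ⟨S, hS, rfl⟩

lemma exists_indep (hμ1 : ∑ v, μ v = 1) (I : Finset V) (hI : IsIndepSet G I) (n : ℕ) :
    ∃ S : Finset (Fin n → V), IsIndepSet (tpow G n) S ∧ (n = 0 → S = ∅) ∧
      pmeas μ n S = fmeas μ I *
        ∑ k ∈ Finset.range n, (fmeas μ (univ \ (I ∪ nbhd G I)))^k := by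
  set U : Finset V := univ \ (I ∪ nbhd G I) with hU
  induction n with
  | zero =>
    exact ⟨∅, fun u hu => absurd hu (Finset.notMem_empty u), fun _ => rfl, by simp [pmeas]⟩
  | succ n ih =>
    obtain ⟨S, hSind, hS0, hSm⟩ := ih
    have hinj : Function.Injective (fun p : V × (Fin n → V) => Fin.cons p.1 p.2 : _ → Fin (n+1) → V) := by
      rintro ⟨a, s⟩ ⟨b, t⟩ h
      simp only [Prod.mk.injEq]
      constructor
      · have := congrFun h 0
        simpa using this
      · funext i
        have := congrFun h i.succ
        simpa using this
    refine ⟨Finset.image (fun p : V × (Fin n → V) => Fin.cons p.1 p.2)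
        ((I ×ˢ univ) ∪ (U ×ˢ S)), ?_, by simp, ?_⟩
    · -- independence
      intro x hx y hy hadj
      simp only [Finset.mem_image, Finset.mem_union, Finset.mem_product, Finset.mem_univ,
        and_true] at hx hy
      obtain ⟨⟨x0, xt⟩, hxp, rfl⟩ := hx
      obtain ⟨⟨y0, yt⟩, hyp, rfl⟩ := hy
      have hadj0 : G.Adj x0 y0 := by
        have := hadj.2 0
        simpa using this
      have hUx : ∀ v ∈ U, ∀ w ∈ I, ¬ G.Adj w v := by
        intro v hv w hw hadjwv
        rw [hU, Finset.mem_sdiff] at hv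
        exact hv.2 (Finset.mem_union_right _ ((mem_nbhd_iff G).2 ⟨w, hw, hadjwv⟩))
      rcases hxp with hxI | ⟨hxU, hxt⟩ <;> rcases hyp with hyI | ⟨hyU, hyt⟩
      · exact hI x0 hxI y0 hyI hadj0
      · exact hUx y0 hyU x0 hxI hadj0
      · exact hUx x0 hxU y0 hyI hadj0.symm
      · -- both tails in S
        by_cases hteq : xt = yt
        · rcases Nat.eq_zero_or_pos n with hn | hn
          · subst hn
            rw [hS0 rfl] at hxt
            exact absurd hxt (Finset.notMem_empty _)
          · have i : Fin n := ⟨0, hn⟩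
            have := hadj.2 i.succ
            simp only [Fin.cons_succ] at this
            rw [hteq] at this
            exact G.loopless.irrefl _ this
        · apply hSind xt hxt yt hyt
          refine ⟨hteq, fun i => ?_⟩
          have := hadj.2 i.succ
          simpa using this
    · -- measure
      rw [pmeas, Finset.sum_image (fun a _ b _ h => hinj h)]
      have hdisj : Disjoint (I ×ˢ (univ : Finset (Fin n → V))) (U ×ˢ S) := by
        rw [Finset.disjoint_left]
        rintro ⟨v, t⟩ hv hv'
        rw [Finset.mem_product] at hv hv'
        have := hv'.1
        rw [hU, Finset.mem_sdiff] at this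
        exact this.2 (Finset.mem_union_left _ hv.1)
      rw [Finset.sum_union hdisj]
      have hprodcons : ∀ p : V × (Fin n → V),
          ∏ i : Fin (n+1), μ ((Fin.cons p.1 p.2 : Fin (n+1) → V) i) = μ p.1 * ∏ i, μ (p.2 i) := by
        intro p
        simp [Fin.prod_univ_succ]
      simp only [hprodcons]
      rw [Finset.sum_product, Finset.sum_product]
      simp only [← Finset.mul_sum]
      rw [← Finset.sum_mul, ← Finset.sum_mul]
      have h1 : ∑ t : Fin n → V, ∏ i, μ (t i) = 1 := pmeas_univ μ hμ1 n
      rw [h1]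
      rw [show (∑ x ∈ S, ∏ i, μ (x i)) = pmeas μ n S from rfl, hSm]
      rw [geom_sum_succ]
      show fmeas μ I * 1 + fmeas μ U * (fmeas μ I * _) = _
      ring

end Aux

theorem stmt_16 {V : Type*} [Fintype V] (G : SimpleGraph V) (μ : V → ℝ)
    (hμ0 : ∀ v, 0 ≤ μ v) (hμ1 : ∑ v, μ v = 1)
    (I : Finset V) (hI : IsIndepSet G I)
    (L : ℝ) (hL : Tendsto (fun n => alphaPow G μ n) atTop (nhds L)) :
    fmeas μ I / (fmeas μ I + fmeas μ (nbhd G I)) ≤ L := by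
  classical
  set a := fmeas μ I with ha
  set b := fmeas μ (nbhd G I) with hb
  set u := fmeas μ (univ \ (I ∪ nbhd G I)) with hu
  have ha0 : 0 ≤ a := Finset.sum_nonneg fun v _ => hμ0 v
  have hb0 : 0 ≤ b := Finset.sum_nonneg fun v _ => hμ0 v
  have hu0 : 0 ≤ u := Finset.sum_nonneg fun v _ => hμ0 v
  have hIN : Disjoint I (nbhd G I) := by
    rw [Finset.disjoint_left]
    intro v hv hv'
    obtain ⟨w, hw, hadj⟩ := (mem_nbhd_iff G).1 hv'
    exact hI w hw v hv hadj
  have husum : u = 1 - (a + b) := by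
    rw [hu, ha, hb, fmeas, fmeas, fmeas, Finset.sum_sdiff_eq_sub (Finset.subset_univ _),
      Finset.sum_union hIN, hμ1]
  have key : ∀ n, a * ∑ k ∈ Finset.range n, u ^ k ≤ alphaPow G μ n := by
    intro n
    obtain ⟨S, hSind, _, hSm⟩ := exists_indep G μ hμ1 I hI n
    calc a * ∑ k ∈ Finset.range n, u ^ k = pmeas μ n S := hSm.symm
      _ ≤ alphaPow G μ n := le_alphaPow G μ hμ0 hμ1 n S hSind
  by_cases hab : a + b = 0
  · have haz : a = 0 := by linarith [ha0, hb0]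
    rw [haz, zero_div]
    have h0 : ∀ n, (0:ℝ) ≤ alphaPow G μ n := by
      intro n
      have := key n
      rw [haz, zero_mul] at this
      exact this
    exact ge_of_tendsto' hL h0
  · have hab0 : 0 < a + b := lt_of_le_of_ne (by linarith) (Ne.symm hab)
    have hu1 : u < 1 := by rw [husum]; linarith
    have hgeo : Tendsto (fun n => a * ∑ k ∈ Finset.range n, u ^ k) atTop
        (nhds (a * (1 - u)⁻¹)) :=
      ((hasSum_geometric_of_lt_one hu0 hu1).tendsto_sum_nat).const_mul a
    have heq : a * (1 - u)⁻¹ = a / (a + b) := by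
      rw [husum]; ring_nf
    rw [← heq] at *
    exact le_of_tendsto_of_tendsto' hgeo hL key
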